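/- There exist two simple graphs G₁ and G₂ on Fin 8, each 4-regular (every vertex has degree 4), such that for every d : ℕ the constant-feature propagations coincide, (G₁.adjMatrix ℕ)^d *ᵥ (fun _ => 1) = (G₂.adjMatrix ℕ)^d *ᵥ (fun _ => 1), and yet Matrix.trace ((G₁.adjMatrix ℕ)^3) ≠ Matrix.trace ((G₂.adjMatrix ℕ)^3). In particular G₁ and G₂ are not isomorphic, they are indistinguishable by any unmasked dynamic feature of the constant feature (and by message-passing on constant features), but they are separated by TREE-G's cycle-walk split rule ∑((A^3 ∘ I) *ᵥ 𝟙) ≶ θ, which computes the trace of A^3 (the Mathlib-expressible core of Lemma 4.4: there exist graphs that GNNs cannot separate but TREE-G can). -/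

import Mathlib

open Matrix

/-- K₄,₄ by parity of `Fin 8` values. -/
def Gbip : SimpleGraph (Fin 8) where
  Adj v w := v.val % 2 ≠ w.val % 2
  symm := by constructor; intro v w h; exact h.symm
  loopless := by constructor; intro v h; exact h rfl

/-- Circulant graph on `Fin 8` with connection set `{±1, ±2}`. -/
def Gcirc : SimpleGraph (Fin 8) where
  Adj v w := (w - v).val ∈ ({1, 2, 6, 7} : Finset ℕ)
  symm := by constructor; intro v w h; revert h; fin_cases v <;> fin_cases w <;> decide
  loopless := by constructor; intro v h; revert h; fin_cases v <;> decide

instance : DecidableRel Gbip.Adj := fun v w => by unfold Gbip; infer_instance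
instance : DecidableRel Gcirc.Adj := fun v w => by unfold Gcirc; infer_instance

lemma pow_mulVec_one (G : SimpleGraph (Fin 8)) [DecidableRel G.Adj]
    (hreg : ∀ v : Fin 8, G.degree v = 4) (d : ℕ) :
    (G.adjMatrix ℕ) ^ d *ᵥ (fun _ => 1) = fun _ => 4 ^ d := by
  induction d with
  | zero => simp [Matrix.one_mulVec]
  | succ n ih =>
      rw [pow_succ, ← Matrix.mulVec_mulVec]
      have h1 : (G.adjMatrix ℕ) *ᵥ (fun _ => 1) = fun _ => 4 := by
        funext v
        rw [show (fun _ : Fin 8 => (1:ℕ)) = Function.const (Fin 8) 1 from rfl]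
        rw [SimpleGraph.adjMatrix_mulVec_const_apply, hreg v]
        simp
      rw [h1]
      have : (fun _ : Fin 8 => (4 : ℕ)) = (4 : ℕ) • (fun _ : Fin 8 => (1 : ℕ)) := by
        funext v; simp
      rw [this, Matrix.mulVec_smul, ih]
      funext v
      simp [pow_succ, mul_comm]

theorem exists_regular_graphs_gnn_indistinguishable_treeg_separable :
    ∃ (G₁ G₂ : SimpleGraph (Fin 8)) (h₁ : DecidableRel G₁.Adj)
      (h₂ : DecidableRel G₂.Adj),
      (∀ v : Fin 8, G₁.degree v = 4) ∧ (∀ v : Fin 8, G₂.degree v = 4) ∧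
      (∀ d : ℕ, (G₁.adjMatrix ℕ) ^ d *ᵥ (fun _ => 1) =
          (G₂.adjMatrix ℕ) ^ d *ᵥ (fun _ => 1)) ∧
      Matrix.trace ((G₁.adjMatrix ℕ) ^ 3) ≠ Matrix.trace ((G₂.adjMatrix ℕ) ^ 3) := by
  refine ⟨Gbip, Gcirc, inferInstance, inferInstance, ?_, ?_, ?_, ?_⟩
  · decide
  · decide
  · intro d
    rw [pow_mulVec_one Gbip (by decide), pow_mulVec_one Gcirc (by decide)]
  · decide
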